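/- arXiv:2602.05869 — 2 statements merged into one kernel-verified Lean document; each statement's English description precedes it below -/
import Mathlib

section
/- Let A ∈ ℝ^{n×r} have columns that are unit vectors a_1, …, a_r with ‖a_i‖_∞^2 ≤ μ/n for all i, and suppose the Gram matrix G = A^T A satisfies λ_min(G) ≥ 1/2. Then the matrix U = A G^{−1/2} has orthonormal columns spanning the column space of A, and ‖U‖_{2,∞}^2 ≤ 2μr/n. -/
open scoped Matrix


/-- Orthonormalization preserves incoherence: if the columns of `A` are unit vectors with
`‖a_i‖_∞² ≤ μ/n`, the Gram matrix `G = AᵀA` satisfies `λ_min(G) ≥ 1/2`, and `R` is the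
(positive semidefinite) inverse square root of `G` (i.e. `R² G = 1`), then `U = A R` has
orthonormal columns spanning the column space of `A` and `‖U‖_{2,∞}² ≤ 2μr/n`. -/
theorem orthonormalize_incoherent {n r : ℕ} (μ : ℝ) (hn : 0 < n)
    (A : Matrix (Fin n) (Fin r) ℝ)
    (hunit : ∀ i, ∑ t, (A t i) ^ 2 = 1)
    (hinf : ∀ i t, (A t i) ^ 2 ≤ μ / n)
    (hG : ((A.transpose * A) - ((1 / 2 : ℝ) • (1 : Matrix (Fin r) (Fin r) ℝ))).PosSemidef)
    (R : Matrix (Fin r) (Fin r) ℝ)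
    (hR : R.PosSemidef)
    (hRsq : R * R * (A.transpose * A) = 1) :
    ((A * R).transpose * (A * R) = 1) ∧
    LinearMap.range (A * R).mulVecLin = LinearMap.range A.mulVecLin ∧
    ∀ t, ∑ i, ((A * R) t i) ^ 2 ≤ 2 * μ * r / n := by
  have hRT : R.transpose = R := hR.1
  have hdet : IsUnit R.det := by
    have h1 : R.det * (R.det * (A.transpose * A).det) = 1 := by
      have := congrArg Matrix.det hRsq
      simpa [Matrix.det_mul, mul_assoc] using this
    exact IsUnit.of_mul_eq_one _ h1
  have hG1 : (A.transpose * A) * (R * R) = 1 := mul_eq_one_comm.mp hRsq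
  have key : R * (A.transpose * A) * R = 1 := by
    have h2 : (R * (A.transpose * A) * R) * R = R := by
      calc (R * (A.transpose * A) * R) * R
          = R * ((A.transpose * A) * (R * R)) := by
            simp [Matrix.mul_assoc]
        _ = R := by rw [hG1, Matrix.mul_one]
    have h3 := congrArg (fun M => M * R⁻¹) h2
    simpa [Matrix.mul_assoc, Matrix.mul_nonsing_inv _ hdet] using h3
  have hpart1 : (A * R).transpose * (A * R) = 1 := by
    rw [Matrix.transpose_mul, hRT]
    calc R * A.transpose * (A * R) = R * (A.transpose * A) * R := by
          simp [Matrix.mul_assoc]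
      _ = 1 := key
  refine ⟨hpart1, ?_, ?_⟩
  · -- range equality
    have hRsurj : LinearMap.range R.mulVecLin = ⊤ := by
      rw [LinearMap.range_eq_top]
      intro w
      exact ⟨R⁻¹.mulVec w, by
        simp [Matrix.mulVecLin_apply, Matrix.mulVec_mulVec,
          Matrix.mul_nonsing_inv _ hdet]⟩
    rw [Matrix.mulVecLin_mul, LinearMap.range_comp_of_range_eq_top _ hRsurj]
  · intro t
    set v : Fin r → ℝ := fun i => A t i with hv
    have hsymm : ∀ (w u : Fin r → ℝ), (R *ᵥ w) ⬝ᵥ u = w ⬝ᵥ (R *ᵥ u) := by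
      intro w u
      rw [Matrix.dotProduct_mulVec, ← hRT, Matrix.vecMul_transpose, hRT]
    have hRvG : (R *ᵥ v) ⬝ᵥ ((A.transpose * A) *ᵥ (R *ᵥ v)) = v ⬝ᵥ v := by
      rw [hsymm, Matrix.mulVec_mulVec, Matrix.mulVec_mulVec, key, Matrix.one_mulVec]
    have hq := hG.dotProduct_mulVec_nonneg (R *ᵥ v)
    have hq' : (1 / 2 : ℝ) * ((R *ᵥ v) ⬝ᵥ (R *ᵥ v)) ≤ v ⬝ᵥ v := by
      have := hq
      simp only [Matrix.sub_mulVec, Matrix.smul_mulVec, Matrix.one_mulVec,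
        dotProduct_sub, dotProduct_smul, star_trivial, smul_eq_mul,
        hRvG] at this
      linarith
    have hrow : ∀ i, (A * R) t i = (R *ᵥ v) i := by
      intro i
      simp only [Matrix.mul_apply, Matrix.mulVec, dotProduct, hv]
      exact Finset.sum_congr rfl fun j _ => by
        have : R j i = R i j := by
          conv_lhs => rw [← hRT]
          rfl
        rw [this]; ring
    have hsum : ∑ i, ((A * R) t i) ^ 2 = (R *ᵥ v) ⬝ᵥ (R *ᵥ v) := by
      simp only [dotProduct, hrow]
      exact Finset.sum_congr rfl fun i _ => by ring
    have hvv : v ⬝ᵥ v ≤ r * (μ / n) := by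
      have : v ⬝ᵥ v = ∑ i, (A t i) ^ 2 := by
        simp [dotProduct, hv, sq]
      rw [this]
      calc ∑ i, (A t i) ^ 2 ≤ ∑ _i : Fin r, μ / n :=
            Finset.sum_le_sum fun i _ => hinf i t
        _ = r * (μ / n) := by simp [Finset.sum_const, mul_comm]
    rw [hsum]
    have : 2 * μ * r / n = 2 * (r * (μ / n)) := by
      field_simp
    rw [this]
    linarith
end

section
/- Let T be an order-k tensor and Q^{(1)}, …, Q^{(k)} orthogonal projection matrices, Q^{(j)} of size n_j × n_j. Define T* = T ×_1 Q^{(1)} ×_2 ⋯ ×_k Q^{(k)}. Then ‖T − T*‖_F ≤ Σ_{j=1}^k ‖(I − Q^{(j)}) unfold_j(T)‖_F. -/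
open Finset Matrix

/-- The mode-`j` unfolding of an order-`k` tensor: rows indexed by mode `j`,
columns indexed by the remaining modes. -/
noncomputable def unfoldAux {k : ℕ} (n : Fin k → ℕ)
    (T : ((j : Fin k) → Fin (n j)) → ℝ) (j : Fin k) :
    Matrix (Fin (n j)) ((l : {l : Fin k // l ≠ j}) → Fin (n l.1)) ℝ :=
  fun i c => T (fun l => if h : l = j then Fin.cast (congrArg n h).symm i else c ⟨l, h⟩)


namespace TPTaux

variable {k : ℕ} {n : Fin k → ℕ}

/-- Glue a mode-`j` index with indices for the remaining modes. -/
def glue (j : Fin k) (x : Fin (n j)) (c : (l : {l : Fin k // l ≠ j}) → Fin (n l.1)) :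
    (l : Fin k) → Fin (n l) :=
  fun l => if h : l = j then Fin.cast (congrArg n h).symm x else c ⟨l, h⟩

lemma glue_apply_self (j : Fin k) (x : Fin (n j)) (c : (l : {l : Fin k // l ≠ j}) → Fin (n l.1)) :
    glue j x c j = x := by
  simp [glue]

lemma update_glue (j : Fin k) (x y : Fin (n j)) (c : (l : {l : Fin k // l ≠ j}) → Fin (n l.1)) :
    Function.update (glue j x c) j y = glue j y c := by
  funext l
  by_cases h : l = j
  · subst h; simp [glue]
  · simp [Function.update, h, glue]

/-- Split equivalence for the index set. -/
def splitEquiv (j : Fin k) :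
    ((l : Fin k) → Fin (n l)) ≃ Fin (n j) × ((l : {l : Fin k // l ≠ j}) → Fin (n l.1)) where
  toFun b := (b j, fun l => b l.1)
  invFun p := glue j p.1 p.2
  left_inv b := by
    funext l
    simp only [glue]
    split_ifs with h
    · subst h; rfl
    · rfl
  right_inv p := by
    refine Prod.ext ?_ ?_
    · simp [glue]
    · funext l
      simp [glue, l.2]

noncomputable def modeMul (Q : (j : Fin k) → Matrix (Fin (n j)) (Fin (n j)) ℝ) (j : Fin k)
    (T : ((l : Fin k) → Fin (n l)) → ℝ) : ((l : Fin k) → Fin (n l)) → ℝ :=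
  fun b => ∑ y : Fin (n j), Q j (b j) y * T (Function.update b j y)

lemma modeMul_glue (Q : (j : Fin k) → Matrix (Fin (n j)) (Fin (n j)) ℝ) (j : Fin k)
    (T : ((l : Fin k) → Fin (n l)) → ℝ) (x : Fin (n j))
    (c : (l : {l : Fin k // l ≠ j}) → Fin (n l.1)) :
    modeMul Q j T (glue j x c) = ∑ y : Fin (n j), Q j x y * T (glue j y c) := by
  simp [modeMul, glue_apply_self, update_glue]

lemma proj_contract {m : ℕ} (Q : Matrix (Fin m) (Fin m) ℝ) (hs : Q.IsSymm) (hp : Q * Q = Q)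
    (v : Fin m → ℝ) : ∑ x, (Q.mulVec v x) ^ 2 ≤ ∑ x, (v x) ^ 2 := by
  have key : ∑ x, (Q.mulVec v x) ^ 2 = ∑ x, Q.mulVec v x * v x := by
    have h1 : ∑ x, (Q.mulVec v x) ^ 2 = (Q.mulVec v) ⬝ᵥ (Q.mulVec v) := by
      simp [dotProduct, sq]
    have h2 : (Q.mulVec v) ⬝ᵥ (Q.mulVec v) = (Q.mulVec v) ⬝ᵥ v := by
      rw [Matrix.dotProduct_mulVec]
      have : Matrix.vecMul (Q.mulVec v) Q = Q.mulVec (Q.mulVec v) := by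
        rw [← Matrix.mulVec_transpose, hs.eq]
      rw [this, Matrix.mulVec_mulVec, hp]
    rw [h1, h2]; rfl
  have h0 : (0:ℝ) ≤ ∑ x, (v x - Q.mulVec v x) ^ 2 :=
    Finset.sum_nonneg fun x _ => sq_nonneg _
  have hexp : ∑ x, (v x - Q.mulVec v x) ^ 2
      = ∑ x, ((v x) ^ 2 - 2 * (Q.mulVec v x * v x) + (Q.mulVec v x) ^ 2) := by
    apply Finset.sum_congr rfl; intro x _; ring
  rw [hexp, Finset.sum_add_distrib, Finset.sum_sub_distrib, ← Finset.mul_sum] at h0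
  linarith [key, h0]

lemma modeMul_contract (Q : (j : Fin k) → Matrix (Fin (n j)) (Fin (n j)) ℝ) (j : Fin k)
    (hs : (Q j).IsSymm) (hp : Q j * Q j = Q j) (T : ((l : Fin k) → Fin (n l)) → ℝ) :
    ∑ b, (modeMul Q j T b) ^ 2 ≤ ∑ b, (T b) ^ 2 := by
  rw [← Equiv.sum_comp (splitEquiv j).symm (fun b => (modeMul Q j T b) ^ 2),
      ← Equiv.sum_comp (splitEquiv j).symm (fun b => (T b) ^ 2), Fintype.sum_prod_type_right,
      Fintype.sum_prod_type_right]
  apply Finset.sum_le_sum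
  intro c _
  have := proj_contract (Q j) hs hp (fun y => T (glue j y c))
  calc ∑ x, (modeMul Q j T ((splitEquiv j).symm (x, c))) ^ 2
      = ∑ x, ((Q j).mulVec (fun y => T (glue j y c)) x) ^ 2 := by
        apply Finset.sum_congr rfl; intro x _
        simp only [splitEquiv, Equiv.coe_fn_symm_mk, modeMul_glue, Matrix.mulVec,
          dotProduct]
    _ ≤ ∑ x, (T (glue j x c)) ^ 2 := this
    _ = ∑ x, (T ((splitEquiv j).symm (x, c))) ^ 2 := rfl


noncomputable def pOp (Q : (j : Fin k) → Matrix (Fin (n j)) (Fin (n j)) ℝ) (S : Finset (Fin k))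
    (T : ((l : Fin k) → Fin (n l)) → ℝ) : ((l : Fin k) → Fin (n l)) → ℝ :=
  fun i => ∑ c, (∏ j ∈ S, Q j (i j) (c j)) *
    ((∏ j ∈ Sᶜ, if c j = i j then (1:ℝ) else 0) * T c)

lemma pOp_empty (Q : (j : Fin k) → Matrix (Fin (n j)) (Fin (n j)) ℝ)
    (T : ((l : Fin k) → Fin (n l)) → ℝ) : pOp Q ∅ T = T := by
  funext i
  simp only [pOp, Finset.prod_empty, one_mul, Finset.compl_empty, Finset.prod_boole]
  rw [Finset.sum_eq_single i]
  · simp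
  · intro c _ hc
    have hne : ¬ ∀ j, c j = i j := fun h => hc (funext h)
    simp [hne]
  · simp

/-- The reindexing `(b, y) ↦ (update b j y, b j)` is an involutive equivalence. -/
def swapUpd (j : Fin k) :
    (((l : Fin k) → Fin (n l)) × Fin (n j)) ≃ (((l : Fin k) → Fin (n l)) × Fin (n j)) where
  toFun p := (Function.update p.1 j p.2, p.1 j)
  invFun p := (Function.update p.1 j p.2, p.1 j)
  left_inv p := by
    refine Prod.ext ?_ ?_ <;>
      simp [Function.update_idem, Function.update_eq_self]
  right_inv p := by
    refine Prod.ext ?_ ?_ <;>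
      simp [Function.update_idem, Function.update_eq_self]

lemma pOp_insert (Q : (j : Fin k) → Matrix (Fin (n j)) (Fin (n j)) ℝ) {S : Finset (Fin k)}
    {j : Fin k} (hj : j ∉ S) (T : ((l : Fin k) → Fin (n l)) → ℝ) :
    pOp Q (insert j S) T = pOp Q S (modeMul Q j T) := by
  funext i
  have hjc : j ∈ Sᶜ := Finset.mem_compl.mpr hj
  -- RHS as a double sum
  have rhs : pOp Q S (modeMul Q j T) i
      = ∑ p : ((l : Fin k) → Fin (n l)) × Fin (n j),
          (∏ l ∈ S, Q l (i l) (p.1 l)) *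
            ((∏ l ∈ Sᶜ, if p.1 l = i l then (1:ℝ) else 0) *
              (Q j (p.1 j) p.2 * T (Function.update p.1 j p.2))) := by
    rw [Fintype.sum_prod_type]
    simp only [pOp, modeMul, Finset.mul_sum]
  rw [rhs, ← Equiv.sum_comp (swapUpd j)]
  rw [Fintype.sum_prod_type]
  simp only [swapUpd, Equiv.coe_fn_mk]
  -- now simplify each (c, x) term
  have step : ∀ c : (l : Fin k) → Fin (n l),
      (∑ x : Fin (n j), (∏ l ∈ S, Q l (i l) (Function.update c j x l)) *
        ((∏ l ∈ Sᶜ, if Function.update c j x l = i l then (1:ℝ) else 0) *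
          (Q j (Function.update c j x j) (c j) *
            T (Function.update (Function.update c j x) j (c j)))))
      = (∏ l ∈ insert j S, Q l (i l) (c l)) *
          ((∏ l ∈ (insert j S)ᶜ, if c l = i l then (1:ℝ) else 0) * T c) := by
    intro c
    have hA : ∀ x : Fin (n j), (∏ l ∈ S, Q l (i l) (Function.update c j x l))
        = ∏ l ∈ S, Q l (i l) (c l) := by
      intro x
      apply Finset.prod_congr rfl
      intro l hl
      have : l ≠ j := fun h => hj (h ▸ hl)
      rw [Function.update_of_ne this]
    have hD : ∀ x : Fin (n j), (∏ l ∈ Sᶜ, if Function.update c j x l = i l then (1:ℝ) else 0)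
        = (if x = i j then (1:ℝ) else 0) *
            ∏ l ∈ Sᶜ.erase j, if c l = i l then (1:ℝ) else 0 := by
      intro x
      rw [← Finset.mul_prod_erase _ _ hjc]
      congr 1
      · simp
      · apply Finset.prod_congr rfl
        intro l hl
        rw [Function.update_of_ne (Finset.ne_of_mem_erase hl)]
    have hT : ∀ x : Fin (n j),
        T (Function.update (Function.update c j x) j (c j)) = T c := by
      intro x; rw [Function.update_idem, Function.update_eq_self]
    have hupd : ∀ x : Fin (n j), Function.update c j x j = x := fun x => by simp
    simp only [hA, hD, hT, hupd]
    rw [Finset.sum_eq_single (i j)]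
    · rw [Finset.prod_insert hj, Finset.compl_insert]
      simp only [if_pos rfl, if_true, one_mul]
      ring
    · intro x _ hx; simp [hx]
    · simp
  exact (Finset.sum_congr rfl (fun c _ => step c)).symm

lemma pOp_univ (Q : (j : Fin k) → Matrix (Fin (n j)) (Fin (n j)) ℝ)
    (T : ((l : Fin k) → Fin (n l)) → ℝ) (i : (l : Fin k) → Fin (n l)) :
    pOp Q Finset.univ T i = ∑ c, (∏ j, Q j (i j) (c j)) * T c := by
  simp [pOp]

lemma pOp_sub (Q : (j : Fin k) → Matrix (Fin (n j)) (Fin (n j)) ℝ) (S : Finset (Fin k))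
    (X Y : ((l : Fin k) → Fin (n l)) → ℝ) (i : (l : Fin k) → Fin (n l)) :
    pOp Q S (fun b => X b - Y b) i = pOp Q S X i - pOp Q S Y i := by
  simp [pOp, mul_sub, Finset.sum_sub_distrib]

lemma pOp_contract (Q : (j : Fin k) → Matrix (Fin (n j)) (Fin (n j)) ℝ)
    (hsym : ∀ j, (Q j).IsSymm) (hproj : ∀ j, Q j * Q j = Q j) (S : Finset (Fin k))
    (T : ((l : Fin k) → Fin (n l)) → ℝ) :
    ∑ b, (pOp Q S T b) ^ 2 ≤ ∑ b, (T b) ^ 2 := by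
  induction S using Finset.induction_on generalizing T with
  | empty => rw [pOp_empty]
  | insert _ _ hj ih =>
    rw [pOp_insert Q hj]
    exact le_trans (ih (modeMul Q _ T)) (modeMul_contract Q _ (hsym _) (hproj _) T)

lemma sqrt_sum_sq_add_le {ι : Type*} [Fintype ι] (X Y : ι → ℝ) :
    Real.sqrt (∑ i, (X i + Y i) ^ 2) ≤
      Real.sqrt (∑ i, (X i) ^ 2) + Real.sqrt (∑ i, (Y i) ^ 2) := by
  have h := norm_add_le ((WithLp.equiv 2 (ι → ℝ)).symm X) ((WithLp.equiv 2 (ι → ℝ)).symm Y)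
  simp only [EuclideanSpace.norm_eq, Real.norm_eq_abs, sq_abs] at h
  simpa using h

lemma telescope (Q : (j : Fin k) → Matrix (Fin (n j)) (Fin (n j)) ℝ)
    (hsym : ∀ j, (Q j).IsSymm) (hproj : ∀ j, Q j * Q j = Q j)
    (T : ((l : Fin k) → Fin (n l)) → ℝ) (S : Finset (Fin k)) :
    Real.sqrt (∑ b, (T b - pOp Q S T b) ^ 2)
      ≤ ∑ j ∈ S, Real.sqrt (∑ b, (T b - modeMul Q j T b) ^ 2) := by
  induction S using Finset.induction_on with
  | empty => simp [pOp_empty]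
  | @insert j S hj ih =>
    rw [Finset.sum_insert hj]
    have hdecomp : ∀ b, T b - pOp Q (insert j S) T b
        = (T b - pOp Q S T b) + pOp Q S (fun b => T b - modeMul Q j T b) b := by
      intro b
      rw [pOp_sub, pOp_insert Q hj]
      ring
    calc Real.sqrt (∑ b, (T b - pOp Q (insert j S) T b) ^ 2)
        = Real.sqrt (∑ b, ((T b - pOp Q S T b)
            + pOp Q S (fun b => T b - modeMul Q j T b) b) ^ 2) := by
          congr 1; exact Finset.sum_congr rfl fun b _ => by rw [hdecomp b]
      _ ≤ Real.sqrt (∑ b, (T b - pOp Q S T b) ^ 2)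
            + Real.sqrt (∑ b, (pOp Q S (fun b => T b - modeMul Q j T b) b) ^ 2) :=
          sqrt_sum_sq_add_le _ _
      _ ≤ (∑ l ∈ S, Real.sqrt (∑ b, (T b - modeMul Q l T b) ^ 2))
            + Real.sqrt (∑ b, (T b - modeMul Q j T b) ^ 2) := by
          exact add_le_add ih (Real.sqrt_le_sqrt (pOp_contract Q hsym hproj S _))
      _ = _ := by ring


lemma term_eq (Q : (j : Fin k) → Matrix (Fin (n j)) (Fin (n j)) ℝ) (j : Fin k)
    (T : ((l : Fin k) → Fin (n l)) → ℝ) :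
    ∑ b, (T b - modeMul Q j T b) ^ 2
      = ∑ x : Fin (n j), ∑ c : (l : {l : Fin k // l ≠ j}) → Fin (n l.1),
          ((((1 - Q j) * unfoldAux n T j : Matrix (Fin (n j)) ((l : {l : Fin k // l ≠ j}) → Fin (n l.1)) ℝ)) x c) ^ 2 := by
  rw [← Equiv.sum_comp (splitEquiv j).symm (fun b => (T b - modeMul Q j T b) ^ 2),
      Fintype.sum_prod_type]
  apply Finset.sum_congr rfl; intro x _
  apply Finset.sum_congr rfl; intro c _
  congr 1
  have hU : ∀ y, unfoldAux n T j y c = T (glue j y c) := fun y => rfl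
  have hsy : (splitEquiv (n := n) j).symm (x, c) = glue j x c := rfl
  rw [Matrix.sub_mul, Matrix.one_mul, Matrix.sub_apply, Matrix.mul_apply, hsy,
    modeMul_glue]
  simp only [hU]

end TPTaux

/-- For orthogonal projections `Q^{(1)}, …, Q^{(k)}` and
`T* = T ×₁ Q^{(1)} ×₂ ⋯ ×ₖ Q^{(k)}`, a telescoping argument gives
`‖T − T*‖_F ≤ ∑_j ‖(I − Q^{(j)}) unfold_j(T)‖_F`. -/
theorem tensor_projection_telescoping {k : ℕ} (n : Fin k → ℕ)
    (T : ((j : Fin k) → Fin (n j)) → ℝ)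
    (Q : (j : Fin k) → Matrix (Fin (n j)) (Fin (n j)) ℝ)
    (hsym : ∀ j, (Q j).IsSymm) (hproj : ∀ j, Q j * Q j = Q j) :
    Real.sqrt (∑ i : (j : Fin k) → Fin (n j),
        (T i - ∑ c : (j : Fin k) → Fin (n j), (∏ j, Q j (i j) (c j)) * T c) ^ 2)
      ≤ ∑ j, Real.sqrt (∑ i : Fin (n j), ∑ c : (l : {l : Fin k // l ≠ j}) → Fin (n l.1),
          ((((1 - Q j) * unfoldAux n T j : Matrix (Fin (n j)) ((l : {l : Fin k // l ≠ j}) → Fin (n l.1)) ℝ)) i c) ^ 2) := by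
  classical
  calc Real.sqrt (∑ i, (T i - ∑ c, (∏ j, Q j (i j) (c j)) * T c) ^ 2)
      = Real.sqrt (∑ i, (T i - TPTaux.pOp Q Finset.univ T i) ^ 2) := by
        congr 1
        exact Finset.sum_congr rfl fun i _ => by rw [TPTaux.pOp_univ]
    _ ≤ ∑ j, Real.sqrt (∑ b, (T b - TPTaux.modeMul Q j T b) ^ 2) :=
        TPTaux.telescope Q hsym hproj T Finset.univ
    _ = _ := Finset.sum_congr rfl fun j _ => by rw [TPTaux.term_eq]
end
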